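/- Let π₀ be an orthogonal projection on a Hilbert space H and (S_t) a C₀-semigroup with ‖π₀ S_t g‖ ≤ e^{γt/2}‖π₀ g‖ for all g ∈ H and t ≥ 0, where γ ≥ 0. Then for the Yosida approximation A_n (n > γ/2): ⟨π₀ A_n h, h⟩ ≤ (γ/(2 − γ/n))‖π₀ h‖² for all h ∈ H. -/

import Mathlib

open MeasureTheory Set Filter Real
open scoped RealInnerProductSpace

lemma exp_neg_mul_integral (b : ℝ) (hb : 0 < b) :
    ∫ t in Ioi (0:ℝ), Real.exp (-b * t) = 1/b := by
  have := integral_comp_mul_left_Ioi (fun x => Real.exp (-x)) 0 hb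
  simp only [mul_zero, integral_exp_neg_Ioi, neg_zero, Real.exp_zero, smul_eq_mul,
    mul_one, neg_mul] at this ⊢
  rw [this, one_div]

theorem stmt_13 {H : Type*} [NormedAddCommGroup H] [InnerProductSpace ℝ H]
    [CompleteSpace H] [SecondCountableTopology H]
    (S : ℝ → H →L[ℝ] H)
    (hS0 : S 0 = ContinuousLinearMap.id ℝ H)
    (hSadd : ∀ s ≥ (0:ℝ), ∀ t ≥ (0:ℝ), S (s + t) = (S s).comp (S t))
    (hScont : ∀ h : H, Tendsto (fun t => S t h) (nhdsWithin 0 (Ici 0)) (nhds h))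
    (π₀ : H →L[ℝ] H)
    (hidem : ∀ x : H, π₀ (π₀ x) = π₀ x)
    (hsa : ∀ x y : H, ⟪π₀ x, y⟫ = ⟪x, π₀ y⟫)
    (γ : ℝ) (hγ : 0 ≤ γ)
    (hbound : ∀ t ≥ (0:ℝ), ∀ g : H, ‖π₀ (S t g)‖ ≤ Real.exp (γ * t / 2) * ‖π₀ g‖)
    (n : ℝ) (hn : 0 < n) (hnγ : γ / 2 < n)
    (hInt : ∀ h : H, IntegrableOn (fun t => Real.exp (-(n * t)) • (S t h - h)) (Ioi 0)) :
    ∀ h : H,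
      ⟪π₀ (n ^ 2 • ∫ t in Ioi (0:ℝ), Real.exp (-(n * t)) • (S t h - h)), h⟫
        ≤ (γ / (2 - γ / n)) * ‖π₀ h‖ ^ 2 := by
  intro h
  set C := ‖π₀ h‖ with hC
  have key : ⟪π₀ (n ^ 2 • ∫ t in Ioi (0:ℝ), Real.exp (-(n * t)) • (S t h - h)), h⟫
      = n ^ 2 * ∫ t in Ioi (0:ℝ), ⟪Real.exp (-(n * t)) • (S t h - h), π₀ h⟫ := by
    rw [hsa]
    rw [real_inner_smul_left]
    rw [real_inner_comm]
    rw [← integral_inner (hInt h) (π₀ h)]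
    congr 1
    exact setIntegral_congr_fun measurableSet_Ioi fun t _ => real_inner_comm _ _
  rw [key]
  have hpt : ∀ t ∈ Ioi (0:ℝ), ⟪Real.exp (-(n * t)) • (S t h - h), π₀ h⟫
      ≤ (Real.exp (-(n - γ/2) * t) - Real.exp (-n * t)) * C ^ 2 := by
    intro t ht
    have ht0 : (0:ℝ) ≤ t := le_of_lt ht
    have h1 : ⟪Real.exp (-(n * t)) • (S t h - h), π₀ h⟫
        = Real.exp (-(n*t)) * ⟪π₀ (S t h) - π₀ h, π₀ h⟫ := by
      rw [real_inner_smul_left]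
      congr 1
      have h0 : ⟪S t h - h, π₀ h⟫ = ⟪S t h - h, π₀ (π₀ h)⟫ := by rw [hidem]
      rw [h0, ← hsa, map_sub]
    rw [h1]
    have h2 : ⟪π₀ (S t h) - π₀ h, π₀ h⟫ ≤ (Real.exp (γ * t / 2) - 1) * C ^ 2 := by
      rw [inner_sub_left, real_inner_self_eq_norm_sq]
      have h3 : ⟪π₀ (S t h), π₀ h⟫ ≤ ‖π₀ (S t h)‖ * ‖π₀ h‖ := real_inner_le_norm _ _
      have h4 := hbound t ht0 h
      nlinarith [norm_nonneg (π₀ h)]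
    have hexp : (0:ℝ) < Real.exp (-(n*t)) := Real.exp_pos _
    calc Real.exp (-(n*t)) * ⟪π₀ (S t h) - π₀ h, π₀ h⟫
        ≤ Real.exp (-(n*t)) * ((Real.exp (γ * t / 2) - 1) * C ^ 2) :=
          mul_le_mul_of_nonneg_left h2 hexp.le
      _ = (Real.exp (-(n - γ/2) * t) - Real.exp (-n * t)) * C ^ 2 := by
          rw [show -(n - γ/2) * t = γ * t / 2 + -(n*t) by ring, Real.exp_add,
            show -n * t = -(n*t) by ring]
          ring
  have hint1 : IntegrableOn
      (fun t => ⟪Real.exp (-(n * t)) • (S t h - h), π₀ h⟫) (Ioi (0:ℝ)) :=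
    (hInt h).inner_const (π₀ h)
  have hi1 : IntegrableOn (fun t => Real.exp (-(n - γ/2) * t)) (Ioi (0:ℝ)) :=
    exp_neg_integrableOn_Ioi 0 (by linarith : (0:ℝ) < n - γ/2)
  have hi2 : IntegrableOn (fun t => Real.exp (-n * t)) (Ioi (0:ℝ)) :=
    exp_neg_integrableOn_Ioi 0 hn
  have hint2 : IntegrableOn
      (fun t => (Real.exp (-(n - γ/2) * t) - Real.exp (-n * t)) * C ^ 2) (Ioi (0:ℝ)) :=
    (hi1.sub hi2).mul_const _
  have hmono : (∫ t in Ioi (0:ℝ), ⟪Real.exp (-(n * t)) • (S t h - h), π₀ h⟫)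
      ≤ ∫ t in Ioi (0:ℝ), (Real.exp (-(n - γ/2) * t) - Real.exp (-n * t)) * C ^ 2 :=
    setIntegral_mono_on hint1 hint2 measurableSet_Ioi hpt
  have hval : (∫ t in Ioi (0:ℝ), (Real.exp (-(n - γ/2) * t) - Real.exp (-n * t)) * C ^ 2)
      = (1/(n - γ/2) - 1/n) * C ^ 2 := by
    rw [integral_mul_const, integral_sub hi1 hi2,
      exp_neg_mul_integral _ (by linarith : (0:ℝ) < n - γ/2), exp_neg_mul_integral _ hn]
  have hfinal : n ^ 2 * ((1/(n - γ/2) - 1/n) * C ^ 2) = (γ / (2 - γ / n)) * C ^ 2 := by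
    have hne1 : n - γ/2 ≠ 0 := ne_of_gt (by linarith)
    have hne2 : (2:ℝ) - γ/n ≠ 0 := by
      have : γ/n < 2 := by rw [div_lt_iff₀ hn]; linarith
      linarith
    have hne3 : n * 2 - γ ≠ 0 := ne_of_gt (by linarith)
    field_simp [hne1, hne2, hne3, hn.ne']
    ring
  calc n ^ 2 * ∫ t in Ioi (0:ℝ), ⟪Real.exp (-(n * t)) • (S t h - h), π₀ h⟫
      ≤ n ^ 2 * ((1/(n - γ/2) - 1/n) * C ^ 2) := by
        rw [← hval]; exact mul_le_mul_of_nonneg_left hmono (by positivity)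
    _ = (γ / (2 - γ / n)) * C ^ 2 := hfinal
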